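/- Every Schwartz function u : ℝ³ → ℂ satisfies V(u) ≥ 2·E(u) − (3/64)·M(u). -/

import Mathlib

open MeasureTheory

noncomputable section

abbrev E3 := EuclideanSpace ℝ (Fin 3)

/-- The mass. -/
def M (u : SchwartzMap E3 ℂ) : ℝ := ∫ x : E3, ‖u x‖ ^ 2

/-- The energy. -/
def En (u : SchwartzMap E3 ℂ) : ℝ :=
  ∫ x : E3, ((1 / 2) * ‖fderiv ℝ u x‖ ^ 2 + (1 / 6) * ‖u x‖ ^ 6 - (1 / 4) * ‖u x‖ ^ 4)

/-- The virial. -/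
def V (u : SchwartzMap E3 ℂ) : ℝ :=
  ∫ x : E3, (‖fderiv ℝ u x‖ ^ 2 + ‖u x‖ ^ 6 - (3 / 4) * ‖u x‖ ^ 4)

lemma integrable_norm_pow' {F : Type*} [NormedAddCommGroup F] [NormedSpace ℝ F]
    (f : SchwartzMap E3 F) (n : ℕ) (hn : 1 ≤ n) :
    Integrable (fun x : E3 => ‖f x‖ ^ n) := by
  set C := (SchwartzMap.seminorm ℝ 0 0) f with hC
  have hb : ∀ x, ‖f x‖ ≤ C := fun x => f.norm_le_seminorm ℝ x
  have hint : Integrable (fun x : E3 => C ^ (n - 1) * ‖f x‖) :=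
    (f.integrable (μ := volume)).norm.const_mul _
  apply hint.mono' ((f.continuous.norm.pow n).aestronglyMeasurable)
  filter_upwards with x
  have h1 : ‖f x‖ ^ n ≤ C ^ (n - 1) * ‖f x‖ := by
    calc ‖f x‖ ^ n = ‖f x‖ ^ (n - 1) * ‖f x‖ := by
          rw [← pow_succ, Nat.sub_add_cancel hn]
      _ ≤ C ^ (n - 1) * ‖f x‖ :=
          mul_le_mul_of_nonneg_right (pow_le_pow_left₀ (norm_nonneg _) (hb x) _) (norm_nonneg _)
  simpa [abs_of_nonneg (pow_nonneg (norm_nonneg (f x)) n)] using h1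

theorem virial_lower_bound (u : SchwartzMap E3 ℂ) :
    V u ≥ 2 * En u - (3 / 64) * M u := by

  have h2 := integrable_norm_pow' u 2 (by norm_num)
  have h4 := integrable_norm_pow' u 4 (by norm_num)
  have h6 := integrable_norm_pow' u 6 (by norm_num)
  have hg : Integrable (fun x : E3 => ‖fderiv ℝ u x‖ ^ 2) := by
    have := integrable_norm_pow' (SchwartzMap.fderivCLM ℝ E3 ℂ u) 2 (by norm_num)
    simpa [SchwartzMap.fderivCLM_apply] using this
  set Ig := ∫ x : E3, ‖fderiv ℝ u x‖ ^ 2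
  set I2 := ∫ x : E3, ‖u x‖ ^ 2
  set I4 := ∫ x : E3, ‖u x‖ ^ 4
  set I6 := ∫ x : E3, ‖u x‖ ^ 6
  have hg' : Integrable (fun x : E3 => (1/2 : ℝ) * ‖fderiv ℝ u x‖ ^ 2) := hg.const_mul _
  have h6' : Integrable (fun x : E3 => (1/6 : ℝ) * ‖u x‖ ^ 6) := h6.const_mul _
  have hA : Integrable (fun x : E3 => (1/2 : ℝ) * ‖fderiv ℝ u x‖ ^ 2 + (1/6) * ‖u x‖ ^ 6) :=
    hg'.add h6'
  have hB : Integrable (fun x : E3 => ‖fderiv ℝ u x‖ ^ 2 + ‖u x‖ ^ 6) := hg.add h6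
  have hEn : En u = (1/2) * Ig + (1/6) * I6 - (1/4) * I4 := by
    unfold En
    rw [integral_sub hA (h4.const_mul _), integral_add hg' h6',
      integral_const_mul, integral_const_mul, integral_const_mul]
  have hV : V u = Ig + I6 - (3/4) * I4 := by
    unfold V
    rw [integral_sub hB (h4.const_mul _), integral_add hg h6, integral_const_mul]
  have hM : M u = I2 := rfl
  have key : 0 ≤ (2/3) * I6 - (1/4) * I4 + (3/64) * I2 := by
    have : (2/3) * I6 - (1/4) * I4 + (3/64) * I2
        = ∫ x : E3, ((2/3) * ‖u x‖ ^ 6 - (1/4) * ‖u x‖ ^ 4 + (3/64) * ‖u x‖ ^ 2) := by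
      have h6'' : Integrable (fun x : E3 => (2/3 : ℝ) * ‖u x‖ ^ 6) := h6.const_mul _
      have h4'' : Integrable (fun x : E3 => (1/4 : ℝ) * ‖u x‖ ^ 4) := h4.const_mul _
      have hC : Integrable (fun x : E3 => (2/3 : ℝ) * ‖u x‖ ^ 6 - (1/4) * ‖u x‖ ^ 4) :=
        h6''.sub h4''
      rw [integral_add hC (h2.const_mul _),
        integral_sub h6'' h4'',
        integral_const_mul, integral_const_mul, integral_const_mul]
    rw [this]
    apply integral_nonneg
    intro x
    simp only [Pi.zero_apply]
    have ha : (0:ℝ) ≤ ‖u x‖ := norm_nonneg _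
    nlinarith [sq_nonneg (‖u x‖ ^ 3 - (3/16) * ‖u x‖), sq_nonneg (‖u x‖), sq_nonneg (‖u x‖^2)]
  rw [hEn, hV, hM]
  linarith
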